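/- For a ≥ arcosh(√(3+√5)/2), ϱ'(a) = ∫₀^∞ sinh(a+t)·(5cosh²(a+t) − cosh²(3a+t))/(cosh²(a+t)·√(sinh(2t)·sinh³(4a+2t))) dt ≤ 0; i.e., ϱ is non-increasing on [A₃, ∞). -/

import Mathlib

open Real MeasureTheory

noncomputable def varrho (a : ℝ) : ℝ :=
  ∫ t in Set.Ioi (0:ℝ),
    Real.sinh (2*a) /
      (Real.cosh (a+t) * Real.sqrt (Real.sinh (2*(a+t))^2 - Real.sinh (2*a)^2))

noncomputable def arcosh (x : ℝ) : ℝ := Real.log (x + Real.sqrt (x^2 - 1))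

noncomputable def E (a : ℝ) : ℝ :=
  ∫ t in Set.Ioi (0:ℝ),
    Real.sinh (a+t) * (5 * Real.cosh (a+t)^2 - Real.cosh (3*a+t)^2) /
      (Real.cosh (a+t)^2 * Real.sqrt (Real.sinh (2*t) * Real.sinh (4*a+2*t)^3))

set_option maxHeartbeats 1000000

/-! ### Algebraic identities for hyperbolic functions -/

lemma hyp_P (x t : ℝ) : Real.sinh (2*(x+t))^2 - Real.sinh (2*x)^2
    = Real.sinh (2*t) * Real.sinh (4*x+2*t) := by
  rw [show 4*x+2*t = (x+x)+((x+x)+(t+t)) by ring, show 2*(x+t) = (x+t)+(x+t) by ring,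
    show 2*x = x+x by ring, show 2*t = t+t by ring]
  simp only [Real.sinh_eq, Real.exp_add, Real.exp_neg]
  have hx := Real.exp_ne_zero x; have ht := Real.exp_ne_zero t
  field_simp
  ring

lemma hyp_main (x t : ℝ) :
    (2*Real.cosh (2*x)*Real.cosh (x+t) - Real.sinh (2*x)*Real.sinh (x+t))
        * (Real.sinh (2*t)*Real.sinh (4*x+2*t))
      - Real.sinh (2*x)*Real.cosh (x+t)*(Real.sinh (4*x+4*t)-Real.sinh (4*x))
    = Real.sinh (x+t)*(5*Real.cosh (x+t)^2-Real.cosh (3*x+t)^2)*Real.sinh (2*t) := by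
  rw [show 4*x+2*t = (x+x)+((x+x)+(t+t)) by ring,
    show 4*x+4*t = ((x+t)+(x+t))+((x+t)+(x+t)) by ring,
    show 4*x = (x+x)+(x+x) by ring,
    show 3*x+t = x+(x+(x+t)) by ring,
    show 2*x = x+x by ring, show 2*t = t+t by ring]
  simp only [Real.sinh_eq, Real.cosh_eq, Real.exp_add, Real.exp_neg]
  have hx := Real.exp_ne_zero x; have ht := Real.exp_ne_zero t
  field_simp
  ring

lemma hyp_R (x t : ℝ) : Real.sinh (4*x+4*t) - Real.sinh (4*x)
    = 2*Real.sinh (2*t)*Real.cosh (4*x+2*t) := by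
  rw [show 4*x+2*t = (x+x)+((x+x)+(t+t)) by ring,
    show 4*x+4*t = ((x+t)+(x+t))+((x+t)+(x+t)) by ring,
    show 4*x = (x+x)+(x+x) by ring, show 2*t = t+t by ring]
  simp only [Real.sinh_eq, Real.cosh_eq, Real.exp_add, Real.exp_neg]
  have hx := Real.exp_ne_zero x; have ht := Real.exp_ne_zero t
  field_simp
  ring

/-! ### arcosh facts and the key inequality -/

lemma cosh_arcosh {x : ℝ} (hx : 1 ≤ x) : Real.cosh (_root_.arcosh x) = x := by
  have h1 : 0 ≤ x^2 - 1 := by nlinarith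
  have hs : Real.sqrt (x^2-1)^2 = x^2-1 := Real.sq_sqrt h1
  have hsn : 0 ≤ Real.sqrt (x^2-1) := Real.sqrt_nonneg _
  have hy : 0 < x + Real.sqrt (x^2-1) := by linarith
  rw [_root_.arcosh, Real.cosh_log hy]
  have h2 : (x + Real.sqrt (x^2-1))⁻¹ = x - Real.sqrt (x^2-1) :=
    inv_eq_of_mul_eq_one_right (by nlinarith)
  rw [h2]; ring

lemma one_lt_c0 : 1 < Real.sqrt (3 + Real.sqrt 5) / 2 := by
  have h5 : (1:ℝ) < Real.sqrt 5 := by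
    rw [show (1:ℝ) = Real.sqrt 1 by simp]
    exact Real.sqrt_lt_sqrt (by norm_num) (by norm_num)
  have : (2:ℝ) < Real.sqrt (3 + Real.sqrt 5) := by
    rw [show (2:ℝ) = Real.sqrt 4 by rw [show (4:ℝ) = 2^2 by norm_num, Real.sqrt_sq]; norm_num]
    exact Real.sqrt_lt_sqrt (by norm_num) (by linarith)
  linarith

lemma arcosh_c0_pos : 0 < _root_.arcosh (Real.sqrt (3 + Real.sqrt 5) / 2) := by
  have h1 := one_lt_c0
  apply Real.log_pos
  have := Real.sqrt_nonneg ((Real.sqrt (3 + Real.sqrt 5) / 2)^2 - 1)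
  linarith

lemma key_ineq {a t : ℝ} (ha : _root_.arcosh (Real.sqrt (3 + Real.sqrt 5) / 2) ≤ a) (ht : 0 ≤ t) :
    Real.sqrt 5 * Real.cosh (a+t) ≤ Real.cosh (3*a+t) := by
  have hA := arcosh_c0_pos
  have ha0 : 0 < a := lt_of_lt_of_le hA ha
  have hca : Real.sqrt (3 + Real.sqrt 5) / 2 ≤ Real.cosh a := by
    rw [← _root_.cosh_arcosh one_lt_c0.le]
    exact Real.cosh_le_cosh.mpr (by rw [abs_of_nonneg hA.le, abs_of_nonneg ha0.le]; exact ha)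
  have hc2 : (3 + Real.sqrt 5)/4 ≤ Real.cosh a ^ 2 := by
    have h35 : (0:ℝ) ≤ 3 + Real.sqrt 5 := by positivity
    have : Real.sqrt (3 + Real.sqrt 5) ^ 2 = 3 + Real.sqrt 5 := Real.sq_sqrt h35
    nlinarith [Real.sqrt_nonneg (3 + Real.sqrt 5), Real.cosh_pos (x := a)]
  have h5 : Real.sqrt 5 ^ 2 = 5 := Real.sq_sqrt (by norm_num)
  have hs : 0 ≤ Real.sinh a := Real.sinh_nonneg_iff.mpr ha0.le
  have hT : 1 ≤ Real.cosh t := Real.one_le_cosh t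
  have hS : 0 ≤ Real.sinh t := Real.sinh_nonneg_iff.mpr ht
  have hcs : Real.cosh a ^ 2 = Real.sinh a ^ 2 + 1 := Real.cosh_sq a
  have hc1 : 1 ≤ Real.cosh a := Real.one_le_cosh a
  rw [show 3*a+t = 2*a+(a+t) by ring, Real.cosh_add (2*a) (a+t), Real.cosh_add a t,
    Real.sinh_add a t, Real.cosh_two_mul, Real.sinh_two_mul]
  have h4 : 0 ≤ 4*Real.cosh a^2 - 3 - Real.sqrt 5 := by linarith
  have hz : Real.cosh a * Real.cosh t * (Real.cosh a^2 - (Real.sinh a^2+1)) = 0 := by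
    rw [hcs]; ring
  nlinarith [mul_nonneg (mul_nonneg (Real.cosh_pos (x:=a)).le (Real.cosh_pos (x:=t)).le) h4,
    mul_nonneg (mul_nonneg hs hS) h4, mul_nonneg hs hS, hz]

/-! ### The derivative of the integrand -/

noncomputable def Fd (x t : ℝ) : ℝ :=
  (2*Real.cosh (2*x) * (Real.cosh (x+t) * Real.sqrt (Real.sinh (2*(x+t))^2 - Real.sinh (2*x)^2))
    - Real.sinh (2*x) * (Real.sinh (x+t) * Real.sqrt (Real.sinh (2*(x+t))^2 - Real.sinh (2*x)^2)
        + Real.cosh (x+t) * (2*Real.sinh (2*t)*Real.cosh (4*x+2*t) / Real.sqrt (Real.sinh (2*(x+t))^2 - Real.sinh (2*x)^2))))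
   / (Real.cosh (x+t) * Real.sqrt (Real.sinh (2*(x+t))^2 - Real.sinh (2*x)^2))^2

lemma hasDerivAt_Fint {x t : ℝ} (hx : 0 < x) (ht : 0 < t) :
    HasDerivAt (fun y => Real.sinh (2*y) /
      (Real.cosh (y+t) * Real.sqrt (Real.sinh (2*(y+t))^2 - Real.sinh (2*y)^2))) (Fd x t) x := by
  have hS2 : 0 < Real.sinh (2*t) := Real.sinh_pos_iff.mpr (by linarith)
  have hS4 : 0 < Real.sinh (4*x+2*t) := Real.sinh_pos_iff.mpr (by linarith)
  have hgpos : 0 < Real.sinh (2*(x+t))^2 - Real.sinh (2*x)^2 := by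
    rw [hyp_P]; exact mul_pos hS2 hS4
  have hσpos : 0 < Real.sqrt (Real.sinh (2*(x+t))^2 - Real.sinh (2*x)^2) := Real.sqrt_pos.mpr hgpos
  have hB : 0 < Real.cosh (x+t) := Real.cosh_pos _
  have hne : Real.cosh (x+t) * Real.sqrt (Real.sinh (2*(x+t))^2 - Real.sinh (2*x)^2) ≠ 0 :=
    ne_of_gt (mul_pos hB hσpos)
  have h2y : HasDerivAt (fun y : ℝ => 2*y) 2 x := by
    simpa using (hasDerivAt_id x).const_mul (2:ℝ)
  have h2yt : HasDerivAt (fun y : ℝ => 2*(y+t)) 2 x := by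
    simpa using ((hasDerivAt_id x).add_const t).const_mul (2:ℝ)
  have hA : HasDerivAt (fun y : ℝ => Real.sinh (2*y)) (Real.cosh (2*x)*2) x := h2y.sinh
  have hC : HasDerivAt (fun y : ℝ => Real.sinh (2*(y+t))) (Real.cosh (2*(x+t))*2) x := h2yt.sinh
  have hBd : HasDerivAt (fun y : ℝ => Real.cosh (y+t)) (Real.sinh (x+t)*1) x :=
    ((hasDerivAt_id x).add_const t).cosh
  have hg : HasDerivAt (fun y => Real.sinh (2*(y+t))^2 - Real.sinh (2*y)^2)
      (4*Real.sinh (2*t)*Real.cosh (4*x+2*t)) x := by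
    have h := (hC.pow 2).sub (hA.pow 2)
    convert h using 1
    · rfl
    · rfl
    · rfl
    push_cast
    rw [pow_one, pow_one]
    rw [show 4*x+2*t = (x+x)+((x+x)+(t+t)) by ring, show 2*(x+t) = (x+t)+(x+t) by ring,
      show 2*x = x+x by ring, show 2*t = t+t by ring]
    simp only [Real.sinh_eq, Real.cosh_eq, Real.exp_add, Real.exp_neg]
    have hxe := Real.exp_ne_zero x; have hte := Real.exp_ne_zero t
    field_simp
    ring
  have hσd := hg.sqrt (ne_of_gt hgpos)
  have hden := hBd.mul hσd
  have raw := hA.div hden hne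
  convert raw using 1
  · rfl
  · rfl
  · rfl
  rw [Fd]
  simp only [Pi.mul_apply]
  field_simp
  ring

lemma Fd_eq {x t : ℝ} (hx : 0 < x) (ht : 0 < t) :
    Fd x t = Real.sinh (x+t) * (5 * Real.cosh (x+t)^2 - Real.cosh (3*x+t)^2) /
      (Real.cosh (x+t)^2 * Real.sqrt (Real.sinh (2*t) * Real.sinh (4*x+2*t)^3)) := by
  have hS2 : 0 < Real.sinh (2*t) := Real.sinh_pos_iff.mpr (by linarith)
  have hS4 : 0 < Real.sinh (4*x+2*t) := Real.sinh_pos_iff.mpr (by linarith)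
  have hB : 0 < Real.cosh (x+t) := Real.cosh_pos _
  have hprod : 0 < Real.sinh (2*t) * Real.sinh (4*x+2*t) := mul_pos hS2 hS4
  have hσ : 0 < Real.sqrt (Real.sinh (2*t) * Real.sinh (4*x+2*t)) := Real.sqrt_pos.mpr hprod
  have hσ2 : Real.sqrt (Real.sinh (2*t) * Real.sinh (4*x+2*t)) ^ 2
      = Real.sinh (2*t) * Real.sinh (4*x+2*t) := Real.sq_sqrt hprod.le
  have hrt : Real.sqrt (Real.sinh (2*t) * Real.sinh (4*x+2*t)^3)
      = Real.sinh (4*x+2*t) * Real.sqrt (Real.sinh (2*t) * Real.sinh (4*x+2*t)) := by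
    rw [show Real.sinh (2*t) * Real.sinh (4*x+2*t)^3
        = (Real.sinh (4*x+2*t))^2 * (Real.sinh (2*t) * Real.sinh (4*x+2*t)) by ring,
      Real.sqrt_mul (sq_nonneg _), Real.sqrt_sq hS4.le]
  have hm := hyp_main x t
  rw [hyp_R] at hm
  rw [Fd, hyp_P, hrt]
  field_simp
  have hp2 : Real.sinh (2*t) = Real.sqrt (Real.sinh (2*t))^2 := (Real.sq_sqrt hS2.le).symm
  have hq2 : Real.sinh (4*x+2*t) = Real.sqrt (Real.sinh (4*x+2*t))^2 := (Real.sq_sqrt hS4.le).symm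
  set p := Real.sqrt (Real.sinh (2*t)) with hp
  set q := Real.sqrt (Real.sinh (4*x+2*t)) with hq
  rw [show x*4 = 4*x by ring, show x*3 = 3*x by ring, hσ2]
  linear_combination (Real.sinh (4*x+2*t)) * hm

/-! ### Bounds -/

lemma cosh_le_exp {u : ℝ} (hu : 0 ≤ u) : Real.cosh u ≤ Real.exp u := by
  rw [Real.cosh_eq]
  have h1 : Real.exp (-u) ≤ Real.exp u := Real.exp_le_exp.mpr (by linarith)
  linarith

lemma exp_le_two_cosh (u : ℝ) : Real.exp u ≤ 2 * Real.cosh u := by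
  rw [Real.cosh_eq]
  have h1 : 0 < Real.exp (-u) := Real.exp_pos _
  linarith

lemma sigma_lower {a x t : ℝ} (ha : 0 < a) (hx1 : a/2 < x) (ht : 0 < t) :
    Real.sqrt (Real.sinh (2*a)) * (Real.sqrt t * Real.exp t)
      ≤ Real.sqrt (Real.sinh (2*t) * Real.sinh (4*x+2*t)) := by
  have hsa : 0 < Real.sinh (2*a) := Real.sinh_pos_iff.mpr (by linarith)
  have h1 : 2*t ≤ Real.sinh (2*t) := Real.self_le_sinh_iff.mpr (by linarith)
  have h2 : Real.sinh (2*a+2*t) ≤ Real.sinh (4*x+2*t) :=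
    Real.sinh_le_sinh.mpr (by linarith)
  have h3 : Real.sinh (2*a) * Real.cosh (2*t) ≤ Real.sinh (2*a+2*t) := by
    rw [Real.sinh_add]
    have := mul_nonneg (Real.cosh_pos (x := 2*a)).le
      (Real.sinh_nonneg_iff.mpr (by linarith : (0:ℝ) ≤ 2*t))
    linarith
  have h4 : Real.exp (2*t) ≤ 2 * Real.cosh (2*t) := exp_le_two_cosh _
  have hkey : Real.sinh (2*a) * (t * Real.exp t ^ 2) ≤ Real.sinh (2*t) * Real.sinh (4*x+2*t) := by
    have he2 : Real.exp t ^ 2 = Real.exp (2*t) := by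
      rw [← Real.exp_nat_mul]; norm_num
    have hc : Real.sinh (2*a) * (t * Real.exp (2*t)) ≤ Real.sinh (2*a+2*t) * (2*t) := by
      have : Real.sinh (2*a) * Real.exp (2*t) ≤ Real.sinh (2*a+2*t) * 2 := by nlinarith
      nlinarith
    have hd : Real.sinh (2*a+2*t) * (2*t) ≤ Real.sinh (2*t) * Real.sinh (4*x+2*t) := by
      have hs4 : 0 < Real.sinh (2*a+2*t) := Real.sinh_pos_iff.mpr (by linarith)
      nlinarith
    rw [he2]; linarith
  have hL : Real.sqrt (Real.sinh (2*a)) * (Real.sqrt t * Real.exp t)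
      = Real.sqrt (Real.sinh (2*a) * (t * Real.exp t ^ 2)) := by
    rw [Real.sqrt_mul hsa.le, Real.sqrt_mul ht.le, Real.sqrt_sq (Real.exp_pos t).le]
  rw [hL]
  exact Real.sqrt_le_sqrt hkey

noncomputable def Cb (a : ℝ) : ℝ :=
  (5/2*Real.sinh a + 2*Real.exp (6*a) + Real.sinh a * Real.sinh (2*a)) /
    (Real.sinh a * Real.sqrt (Real.sinh (2*a)))

lemma rpow_half_eq {t : ℝ} (ht : 0 < t) :
    Real.exp (-t) * t ^ (-(1:ℝ)/2) = (Real.sqrt t * Real.exp t)⁻¹ := by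
  rw [show (-(1:ℝ)/2) = -(1/2) by ring, Real.rpow_neg ht.le, ← Real.sqrt_eq_rpow,
    Real.exp_neg, mul_inv]
  ring

lemma main_bound {a x t : ℝ} (ha : 0 < a) (hx1 : a/2 < x) (hx2 : x < 3*a/2) (ht : 0 < t) :
    |Real.sinh (x+t) * (5 * Real.cosh (x+t)^2 - Real.cosh (3*x+t)^2) /
      (Real.cosh (x+t)^2 * Real.sqrt (Real.sinh (2*t) * Real.sinh (4*x+2*t)^3))|
      ≤ Cb a * (Real.exp (-t) * t ^ (-(1:ℝ)/2)) := by
  have hx0 : 0 < x := by linarith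
  have hS2 : 0 < Real.sinh (2*t) := Real.sinh_pos_iff.mpr (by linarith)
  have hS4 : 0 < Real.sinh (4*x+2*t) := Real.sinh_pos_iff.mpr (by linarith)
  have hB : 0 < Real.cosh (x+t) := Real.cosh_pos _
  have hB1 : 1 ≤ Real.cosh (x+t) := Real.one_le_cosh _
  have hSxt : 0 < Real.sinh (x+t) := Real.sinh_pos_iff.mpr (by linarith)
  have hsa : 0 < Real.sinh a := Real.sinh_pos_iff.mpr ha
  have hs2a : 0 < Real.sinh (2*a) := Real.sinh_pos_iff.mpr (by linarith)
  have hσ : 0 < Real.sqrt (Real.sinh (2*t) * Real.sinh (4*x+2*t)) :=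
    Real.sqrt_pos.mpr (mul_pos hS2 hS4)
  have hrt : Real.sqrt (Real.sinh (2*t) * Real.sinh (4*x+2*t)^3)
      = Real.sinh (4*x+2*t) * Real.sqrt (Real.sinh (2*t) * Real.sinh (4*x+2*t)) := by
    rw [show Real.sinh (2*t) * Real.sinh (4*x+2*t)^3
        = (Real.sinh (4*x+2*t))^2 * (Real.sinh (2*t) * Real.sinh (4*x+2*t)) by ring,
      Real.sqrt_mul (sq_nonneg _), Real.sqrt_sq hS4.le]
  have hst : 0 < Real.sqrt t := Real.sqrt_pos.mpr ht
  have het := Real.exp_pos t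
  have hf4 : Real.sinh (x+t) ≤ Real.cosh (x+t) := (Real.sinh_lt_cosh _).le
  have hf1 : 2*Real.sinh (x+t) ≤ Real.sinh (4*x+2*t) := by
    have h1 : Real.sinh (2*(x+t)) ≤ Real.sinh (4*x+2*t) := Real.sinh_le_sinh.mpr (by linarith)
    rw [Real.sinh_two_mul] at h1
    nlinarith
  have hf2 : Real.sinh a * Real.exp (2*x+2*t) ≤ 2*Real.sinh (4*x+2*t) := by
    have h1 : Real.sinh (a+(2*x+2*t)) ≤ Real.sinh (4*x+2*t) := Real.sinh_le_sinh.mpr (by linarith)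
    have h2 : Real.sinh a * Real.cosh (2*x+2*t) ≤ Real.sinh (a+(2*x+2*t)) := by
      rw [Real.sinh_add]
      have := mul_nonneg (Real.cosh_pos (x := a)).le
        (Real.sinh_nonneg_iff.mpr (by linarith : (0:ℝ) ≤ 2*x+2*t))
      linarith
    have h3 := mul_le_mul_of_nonneg_left (exp_le_two_cosh (2*x+2*t)) hsa.le
    linarith
  have hf3 : Real.cosh (3*x+t)^2 ≤ Real.exp (6*a) * Real.exp (2*x+2*t) := by
    have h1 : Real.cosh (3*x+t) ≤ Real.exp (3*x+t) := cosh_le_exp (by linarith)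
    have h2 : Real.cosh (3*x+t)^2 ≤ Real.exp (3*x+t)^2 :=
      pow_le_pow_left₀ (Real.cosh_pos _).le h1 2
    have h3 : Real.exp (3*x+t)^2 = Real.exp (4*x) * Real.exp (2*x+2*t) := by
      rw [sq, ← Real.exp_add, ← Real.exp_add]; congr 1; ring
    have h4 : Real.exp (4*x) ≤ Real.exp (6*a) := Real.exp_le_exp.mpr (by linarith)
    nlinarith [Real.exp_pos (2*x+2*t)]
  have core : Real.sinh a * (Real.sinh (x+t)*(5*Real.cosh (x+t)^2 + Real.cosh (3*x+t)^2))
      ≤ (5/2*Real.sinh a + 2*Real.exp (6*a) + Real.sinh a * Real.sinh (2*a))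
        * (Real.cosh (x+t)^2 * Real.sinh (4*x+2*t)) := by
    nlinarith [mul_nonneg (mul_nonneg hsa.le (sq_nonneg (Real.cosh (x+t))))
        (sub_nonneg.2 hf1),
      mul_le_mul hf4 hf3 (sq_nonneg _) hB.le,
      mul_le_mul_of_nonneg_left
        (mul_le_mul hf4 hf3 (sq_nonneg _) hB.le) hsa.le,
      mul_le_mul_of_nonneg_left hf2
        (mul_nonneg hB.le (Real.exp_pos (6*a)).le),
      mul_nonneg (mul_nonneg (Real.exp_pos (6*a)).le hS4.le)
        (mul_nonneg hB.le (sub_nonneg.2 hB1)),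
      mul_nonneg (mul_nonneg hsa.le hs2a.le) (mul_nonneg (sq_nonneg (Real.cosh (x+t))) hS4.le),
      mul_pos hS2 hS4, hSxt.le]
  rw [hrt, abs_div, abs_mul, abs_of_pos hSxt,
    abs_of_pos (by positivity : (0:ℝ) < Real.cosh (x+t)^2 * (Real.sinh (4*x+2*t) * Real.sqrt (Real.sinh (2*t) * Real.sinh (4*x+2*t)))),
    rpow_half_eq ht, Cb]
  have habs : |5 * Real.cosh (x+t)^2 - Real.cosh (3*x+t)^2|
      ≤ 5*Real.cosh (x+t)^2 + Real.cosh (3*x+t)^2 := by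
    rw [abs_le]; constructor <;> nlinarith [sq_nonneg (Real.cosh (3*x+t)), sq_nonneg (Real.cosh (x+t))]
  have hσlow := sigma_lower ha hx1 ht
  rw [show (5/2*Real.sinh a + 2*Real.exp (6*a) + Real.sinh a * Real.sinh (2*a))
        / (Real.sinh a * Real.sqrt (Real.sinh (2*a))) * (Real.sqrt t * Real.exp t)⁻¹
      = (5/2*Real.sinh a + 2*Real.exp (6*a) + Real.sinh a * Real.sinh (2*a))
        / (Real.sinh a * Real.sqrt (Real.sinh (2*a)) * (Real.sqrt t * Real.exp t))
      from by rw [← div_eq_mul_inv, div_div]]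
  rw [div_le_div_iff₀ (by positivity) (by positivity)]
  calc Real.sinh (x+t) * |5 * Real.cosh (x+t)^2 - Real.cosh (3*x+t)^2|
        * (Real.sinh a * Real.sqrt (Real.sinh (2*a)) * (Real.sqrt t * Real.exp t))
      ≤ (Real.sinh a * (Real.sinh (x+t)*(5*Real.cosh (x+t)^2 + Real.cosh (3*x+t)^2)))
        * (Real.sqrt (Real.sinh (2*a)) * (Real.sqrt t * Real.exp t)) := by
        have h1 : Real.sinh (x+t) * |5 * Real.cosh (x+t)^2 - Real.cosh (3*x+t)^2|
            ≤ Real.sinh (x+t)*(5*Real.cosh (x+t)^2 + Real.cosh (3*x+t)^2) :=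
          mul_le_mul_of_nonneg_left habs hSxt.le
        have h2 := mul_le_mul_of_nonneg_right h1
          (by positivity : (0:ℝ) ≤ Real.sinh a * (Real.sqrt (Real.sinh (2*a)) * (Real.sqrt t * Real.exp t)))
        calc _ = Real.sinh (x+t) * |5 * Real.cosh (x+t)^2 - Real.cosh (3*x+t)^2| *
              (Real.sinh a * (Real.sqrt (Real.sinh (2*a)) * (Real.sqrt t * Real.exp t))) := by ring
          _ ≤ Real.sinh (x+t)*(5*Real.cosh (x+t)^2 + Real.cosh (3*x+t)^2) *
              (Real.sinh a * (Real.sqrt (Real.sinh (2*a)) * (Real.sqrt t * Real.exp t))) := h2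
          _ = _ := by ring
    _ ≤ ((5/2*Real.sinh a + 2*Real.exp (6*a) + Real.sinh a * Real.sinh (2*a))
          * (Real.cosh (x+t)^2 * Real.sinh (4*x+2*t)))
        * Real.sqrt (Real.sinh (2*t) * Real.sinh (4*x+2*t)) := by
        apply mul_le_mul core hσlow (by positivity) (by positivity)
    _ = (5/2*Real.sinh a + 2*Real.exp (6*a) + Real.sinh a * Real.sinh (2*a))
        * (Real.cosh (x+t)^2 * (Real.sinh (4*x+2*t) * Real.sqrt (Real.sinh (2*t) * Real.sinh (4*x+2*t)))) := by
        ring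

lemma F_bound {a t : ℝ} (ha : 0 < a) (ht : 0 < t) :
    |Real.sinh (2*a) / (Real.cosh (a+t) * Real.sqrt (Real.sinh (2*(a+t))^2 - Real.sinh (2*a)^2))|
      ≤ Cb a * (Real.exp (-t) * t ^ (-(1:ℝ)/2)) := by
  rw [hyp_P]
  have hS2 : 0 < Real.sinh (2*t) := Real.sinh_pos_iff.mpr (by linarith)
  have hS4 : 0 < Real.sinh (4*a+2*t) := Real.sinh_pos_iff.mpr (by linarith)
  have hB1 : 1 ≤ Real.cosh (a+t) := Real.one_le_cosh _
  have hB : 0 < Real.cosh (a+t) := Real.cosh_pos _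
  have hsa : 0 < Real.sinh a := Real.sinh_pos_iff.mpr ha
  have hs2a : 0 < Real.sinh (2*a) := Real.sinh_pos_iff.mpr (by linarith)
  have hσ : 0 < Real.sqrt (Real.sinh (2*t) * Real.sinh (4*a+2*t)) :=
    Real.sqrt_pos.mpr (mul_pos hS2 hS4)
  have hst : 0 < Real.sqrt t := Real.sqrt_pos.mpr ht
  have het := Real.exp_pos t
  have hσlow := sigma_lower ha (by linarith : a/2 < a) ht
  rw [abs_of_pos (by positivity), rpow_half_eq ht, Cb]
  rw [show (5/2*Real.sinh a + 2*Real.exp (6*a) + Real.sinh a * Real.sinh (2*a))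
        / (Real.sinh a * Real.sqrt (Real.sinh (2*a))) * (Real.sqrt t * Real.exp t)⁻¹
      = (5/2*Real.sinh a + 2*Real.exp (6*a) + Real.sinh a * Real.sinh (2*a))
        / (Real.sinh a * Real.sqrt (Real.sinh (2*a)) * (Real.sqrt t * Real.exp t))
      from by rw [← div_eq_mul_inv, div_div]]
  rw [div_le_div_iff₀ (by positivity) (by positivity)]
  have h1 : Real.sinh a * Real.sinh (2*a)
      ≤ 5/2*Real.sinh a + 2*Real.exp (6*a) + Real.sinh a * Real.sinh (2*a) := by
    nlinarith [Real.exp_pos (6*a)]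
  calc Real.sinh (2*a) * (Real.sinh a * Real.sqrt (Real.sinh (2*a)) * (Real.sqrt t * Real.exp t))
      = (Real.sinh a * Real.sinh (2*a)) * (Real.sqrt (Real.sinh (2*a)) * (Real.sqrt t * Real.exp t)) := by
        ring
    _ ≤ (5/2*Real.sinh a + 2*Real.exp (6*a) + Real.sinh a * Real.sinh (2*a))
        * Real.sqrt (Real.sinh (2*t) * Real.sinh (4*a+2*t)) :=
        mul_le_mul h1 hσlow (by positivity) (by positivity)
    _ ≤ (5/2*Real.sinh a + 2*Real.exp (6*a) + Real.sinh a * Real.sinh (2*a))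
        * (Real.cosh (a+t) * Real.sqrt (Real.sinh (2*t) * Real.sinh (4*a+2*t))) := by
        have h2 := le_mul_of_one_le_left hσ.le hB1
        have hNum : (0:ℝ) ≤ 5/2*Real.sinh a + 2*Real.exp (6*a) + Real.sinh a * Real.sinh (2*a) := by
          nlinarith [mul_pos hsa hs2a, Real.exp_pos (6*a)]
        exact mul_le_mul_of_nonneg_left h2 hNum

lemma bound_int (c : ℝ) :
    Integrable (fun t => c * (Real.exp (-t) * t ^ (-(1:ℝ)/2)))
      (volume.restrict (Set.Ioi (0:ℝ))) := by
  have h := Real.GammaIntegral_convergent (by norm_num : (0:ℝ) < 1/2)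
  have h2 : ((1:ℝ)/2 - 1) = -(1:ℝ)/2 := by norm_num
  rw [h2] at h
  exact h.const_mul c

lemma meas_F (x : ℝ) : AEStronglyMeasurable
    (fun t => Real.sinh (2*x) /
      (Real.cosh (x+t) * Real.sqrt (Real.sinh (2*(x+t))^2 - Real.sinh (2*x)^2)))
    (volume.restrict (Set.Ioi (0:ℝ))) := by
  apply Measurable.aestronglyMeasurable
  fun_prop

lemma meas_Fd (a : ℝ) : AEStronglyMeasurable (fun t => Fd a t)
    (volume.restrict (Set.Ioi (0:ℝ))) := by
  apply Measurable.aestronglyMeasurable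
  unfold Fd
  fun_prop

/-! ### E is nonpositive -/

lemma E_nonpos {a : ℝ} (ha : _root_.arcosh (Real.sqrt (3 + Real.sqrt 5) / 2) ≤ a) : E a ≤ 0 := by
  apply setIntegral_nonpos measurableSet_Ioi
  intro t ht
  have ha0 : 0 < a := lt_of_lt_of_le arcosh_c0_pos ha
  have ht0 : 0 < t := ht
  have hSxt : 0 ≤ Real.sinh (a+t) := Real.sinh_nonneg_iff.mpr (by linarith)
  have hkey := key_ineq ha ht0.le
  have h5 : Real.sqrt 5 ^ 2 = 5 := Real.sq_sqrt (by norm_num)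
  have hnum : Real.sinh (a+t) * (5 * Real.cosh (a+t)^2 - Real.cosh (3*a+t)^2) ≤ 0 := by
    have h2 : 5 * Real.cosh (a+t)^2 - Real.cosh (3*a+t)^2 ≤ 0 := by
      nlinarith [mul_nonneg (sub_nonneg.2 hkey)
        (by positivity : (0:ℝ) ≤ Real.sqrt 5 * Real.cosh (a+t) + Real.cosh (3*a+t)),
        Real.cosh_pos (x := a+t), Real.sqrt_nonneg 5]
    exact mul_nonpos_iff.mpr (Or.inl ⟨hSxt, h2⟩)
  exact div_nonpos_of_nonpos_of_nonneg hnum (by positivity)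

/-! ### The derivative -/

lemma hasDeriv_varrho {a : ℝ} (ha : _root_.arcosh (Real.sqrt (3 + Real.sqrt 5) / 2) ≤ a) :
    HasDerivAt varrho (E a) a := by
  have ha0 : 0 < a := lt_of_lt_of_le arcosh_c0_pos ha
  have hε : 0 < a/2 := by linarith
  have main := hasDerivAt_integral_of_dominated_loc_of_deriv_le
    (μ := volume.restrict (Set.Ioi (0:ℝ)))
    (F := fun x t => Real.sinh (2*x) /
      (Real.cosh (x+t) * Real.sqrt (Real.sinh (2*(x+t))^2 - Real.sinh (2*x)^2)))
    (F' := fun x t => Fd x t) (x₀ := a)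
    (bound := fun t => Cb a * (Real.exp (-t) * t ^ (-(1:ℝ)/2)))
    (Metric.ball_mem_nhds a hε)
    (Filter.Eventually.of_forall (fun x => meas_F x))
    (by
      apply Integrable.mono' (bound_int (Cb a)) (meas_F a)
      rw [ae_restrict_iff' measurableSet_Ioi]
      apply Filter.Eventually.of_forall
      intro t ht
      rw [Real.norm_eq_abs]
      exact F_bound ha0 ht)
    (meas_Fd a)
    (by
      rw [ae_restrict_iff' measurableSet_Ioi]
      apply Filter.Eventually.of_forall
      intro t ht x hx
      rw [Metric.mem_ball, Real.dist_eq, abs_sub_lt_iff] at hx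
      have hx1 : a/2 < x := by linarith [hx.2]
      have hx2 : x < 3*a/2 := by linarith [hx.1]
      rw [Real.norm_eq_abs]
      show |Fd x t| ≤ _
      rw [Fd_eq (by linarith : (0:ℝ) < x) ht]
      exact main_bound ha0 hx1 hx2 ht)
    (bound_int (Cb a))
    (by
      rw [ae_restrict_iff' measurableSet_Ioi]
      apply Filter.Eventually.of_forall
      intro t ht x hx
      rw [Metric.mem_ball, Real.dist_eq, abs_sub_lt_iff] at hx
      have hx1 : a/2 < x := by linarith [hx.2]
      exact hasDerivAt_Fint (by linarith) ht)
  have heq : (∫ t in Set.Ioi (0:ℝ), Fd a t) = E a := by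
    rw [E]
    apply setIntegral_congr_fun measurableSet_Ioi
    intro t ht
    exact Fd_eq ha0 ht
  have hd := main.2
  rw [heq] at hd
  exact hd

theorem varrho_antitone :
    (∀ a, _root_.arcosh (Real.sqrt (3 + Real.sqrt 5) / 2) ≤ a →
      HasDerivAt varrho (E a) a ∧ E a ≤ 0) ∧
    AntitoneOn varrho (Set.Ici (_root_.arcosh (Real.sqrt (3 + Real.sqrt 5) / 2))) := by
  constructor
  · intro a ha
    exact ⟨hasDeriv_varrho ha, E_nonpos ha⟩
  · apply antitoneOn_of_deriv_nonpos (convex_Ici _)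
    · intro b hb
      exact (hasDeriv_varrho hb).continuousAt.continuousWithinAt
    · rw [interior_Ici]
      intro b hb
      exact (hasDeriv_varrho hb.le).differentiableAt.differentiableWithinAt
    · rw [interior_Ici]
      intro b hb
      rw [(hasDeriv_varrho hb.le).deriv]
      exact E_nonpos hb.le
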